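/- Define C_1(κ) := (1/2) sup over τ ∈ [0, Z] of ∫_0^Z κ E_1(κ|s − τ|) ds. Then C_1(κ) < 1 for every κ > 0 and Z > 0. -/

import Mathlib

open MeasureTheory Real

/-- The exponential integral `E₁(x) = ∫_1^∞ e^{-x t}/t dt`. -/
noncomputable def E1 (x : ℝ) : ℝ := ∫ t in Set.Ioi (1 : ℝ), Real.exp (-(x * t)) / t

/-- `C₁(κ) = (1/2) sup_{τ ∈ [0,Z]} ∫₀^Z κ E₁(κ|s-τ|) ds`. -/
noncomputable def C1 (Z κ : ℝ) : ℝ :=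
  (1 / 2) * sSup ((fun τ => ∫ s in (0 : ℝ)..Z, κ * E1 (κ * |s - τ|)) '' Set.Icc 0 Z)

open Set

lemma int_exp_mul (c a b : ℝ) (hc : c ≠ 0) :
    ∫ s in a..b, Real.exp (c * s) = (Real.exp (c * b) - Real.exp (c * a)) / c := by
  rw [intervalIntegral.integral_comp_mul_left (f := Real.exp) hc, integral_exp, smul_eq_mul]
  ring

lemma eval_abs_exp {c τ Z : ℝ} (hc : 0 < c) (h0 : 0 ≤ τ) (hZ : τ ≤ Z) :
    ∫ s in (0:ℝ)..Z, Real.exp (-(c * |s - τ|))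
      = (2 - Real.exp (-(c * τ)) - Real.exp (-(c * (Z - τ)))) / c := by
  have hcont : ∀ a b : ℝ, IntervalIntegrable (fun s => Real.exp (-(c * |s - τ|)))
      MeasureTheory.volume a b := by
    intro a b
    exact (Continuous.intervalIntegrable (by continuity) a b)
  have hsplit := intervalIntegral.integral_add_adjacent_intervals (hcont 0 τ) (hcont τ Z)
  have h1 : ∫ s in (0:ℝ)..τ, Real.exp (-(c * |s - τ|))
      = (1 - Real.exp (-(c * τ))) / c := by
    have he : ∀ s ∈ Set.uIcc (0:ℝ) τ, Real.exp (-(c * |s - τ|))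
        = Real.exp (c * s) * Real.exp (-(c * τ)) := by
      intro s hs
      rw [Set.uIcc_of_le h0] at hs
      rw [abs_of_nonpos (by linarith [hs.2]), ← Real.exp_add]
      ring_nf
    rw [intervalIntegral.integral_congr he, intervalIntegral.integral_mul_const,
      int_exp_mul c 0 τ hc.ne']
    rw [mul_zero, Real.exp_zero, Real.exp_neg]
    have := Real.exp_ne_zero (c * τ)
    field_simp
  have h2 : ∫ s in τ..Z, Real.exp (-(c * |s - τ|))
      = (1 - Real.exp (-(c * (Z - τ)))) / c := by
    have he : ∀ s ∈ Set.uIcc τ Z, Real.exp (-(c * |s - τ|))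
        = Real.exp ((-c) * s) * Real.exp (c * τ) := by
      intro s hs
      rw [Set.uIcc_of_le hZ] at hs
      rw [abs_of_nonneg (by linarith [hs.1]), ← Real.exp_add]
      ring_nf
    rw [intervalIntegral.integral_congr he, intervalIntegral.integral_mul_const,
      int_exp_mul (-c) τ Z (by simpa using hc.ne')]
    rw [show -(c * (Z - τ)) = c * τ - c * Z by ring, Real.exp_sub,
      show (-c) * Z = -(c * Z) by ring, show (-c) * τ = -(c * τ) by ring,
      Real.exp_neg, Real.exp_neg]
    have h3 := Real.exp_ne_zero (c * Z)
    have h4 := Real.exp_ne_zero (c * τ)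
    field_simp
    ring
  rw [← hsplit, h1, h2]
  ring

lemma rpow_neg_two_eq {t : ℝ} (ht : 0 < t) : t ^ (-2 : ℝ) = (t ^ 2)⁻¹ := by
  rw [show (-2:ℝ) = -((2:ℕ):ℝ) by norm_num, Real.rpow_neg ht.le, Real.rpow_natCast]

section main
variable {Z κ : ℝ}

lemma hint2 : IntegrableOn (fun t : ℝ => t ^ (-2 : ℝ)) (Set.Ioi 1) volume :=
  integrableOn_Ioi_rpow_of_lt (by norm_num) one_pos

/-- generic integrability: measurable, 0 ≤ f ≤ C/t² on Ioi 1 -/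
lemma integrable_of_le_inv_sq {f : ℝ → ℝ} (hm : Measurable f) {C : ℝ}
    (hb : ∀ t : ℝ, 1 < t → |f t| ≤ C * (t ^ 2)⁻¹) :
    IntegrableOn f (Set.Ioi 1) volume := by
  apply Integrable.mono (hint2.const_mul C) hm.aestronglyMeasurable.restrict
  filter_upwards [ae_restrict_mem measurableSet_Ioi] with t ht
  have ht0 : (0:ℝ) < t := lt_trans one_pos ht
  rw [Real.norm_eq_abs, Real.norm_eq_abs, rpow_neg_two_eq ht0]
  calc |f t| ≤ C * (t ^ 2)⁻¹ := hb t ht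
    _ ≤ |C * (t ^ 2)⁻¹| := le_abs_self _

lemma key_bound (hZ : 0 < Z) (hκ : 0 < κ) {τ : ℝ} (hτ0 : 0 ≤ τ) (hτZ : τ ≤ Z) :
    (∫ s in (0:ℝ)..Z, κ * E1 (κ * |s - τ|))
      ≤ ∫ t in Set.Ioi (1:ℝ), (2 - 2 * Real.exp (-(κ * Z * t))) / t ^ 2 := by
  set F : ℝ → ℝ → ℝ := fun s t => κ * (Real.exp (-(κ * |s - τ| * t)) / t) with hF
  set g : ℝ → ℝ :=
    fun t => (2 - Real.exp (-(κ * t * τ)) - Real.exp (-(κ * t * (Z - τ)))) / t ^ 2 with hg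
  have hpt : ∀ s : ℝ, κ * E1 (κ * |s - τ|) = ∫ t in Set.Ioi (1:ℝ), F s t := by
    intro s
    rw [E1]
    exact (MeasureTheory.integral_const_mul κ _).symm
  have hFnn : ∀ s t : ℝ, 0 < t → 0 ≤ F s t := by
    intro s t ht
    have := Real.exp_nonneg (-(κ * |s - τ| * t))
    positivity
  have hsec : ∀ t : ℝ, t ∈ Set.Ioi (1:ℝ) → ∫ s in Set.Ioc (0:ℝ) Z, F s t = g t := by
    intro t ht
    have ht0 : (0:ℝ) < t := lt_trans one_pos ht
    have hct : 0 < κ * t := mul_pos hκ ht0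
    have harg : ∀ s : ℝ, F s t = (κ / t) * Real.exp (-(κ * t * |s - τ|)) := by
      intro s
      simp only [hF]
      rw [show κ * |s - τ| * t = κ * t * |s - τ| by ring]
      ring
    simp only [harg]
    rw [← intervalIntegral.integral_of_le hZ.le, intervalIntegral.integral_const_mul,
      eval_abs_exp hct hτ0 hτZ, hg]
    field_simp
  have hgb : ∀ t : ℝ, 1 < t → |g t| ≤ 2 * (t ^ 2)⁻¹ := by
    intro t ht
    have ht0 : (0:ℝ) < t := lt_trans one_pos ht
    have h1 : Real.exp (-(κ * t * τ)) ≤ 1 :=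
      Real.exp_le_one_iff.mpr (neg_nonpos.mpr (by positivity))
    have h2 : Real.exp (-(κ * t * (Z - τ))) ≤ 1 :=
      Real.exp_le_one_iff.mpr (neg_nonpos.mpr (mul_nonneg (by positivity) (by linarith)))
    have h3 : 0 < Real.exp (-(κ * t * τ)) := Real.exp_pos _
    have h4 : 0 < Real.exp (-(κ * t * (Z - τ))) := Real.exp_pos _
    rw [hg, abs_div, abs_of_nonneg (by nlinarith : (0:ℝ) ≤ 2 - Real.exp (-(κ * t * τ)) - Real.exp (-(κ * t * (Z - τ)))), abs_of_nonneg (by positivity : (0:ℝ) ≤ t ^ 2)]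
    rw [div_le_iff₀ (by positivity)]
    have : (t ^ 2)⁻¹ * t ^ 2 = 1 := by
      field_simp
    nlinarith
  have hgmeas : Measurable g := by
    apply Measurable.div
    · fun_prop
    · fun_prop
  have hgint : IntegrableOn g (Set.Ioi 1) volume := integrable_of_le_inv_sq hgmeas hgb
  have hmeasF : AEStronglyMeasurable (Function.uncurry F)
      ((volume.restrict (Set.Ioc 0 Z)).prod (volume.restrict (Set.Ioi 1))) := by
    apply Measurable.aestronglyMeasurable
    apply Measurable.mul measurable_const
    apply Measurable.div _ measurable_snd
    fun_prop
  have hprod : Integrable (Function.uncurry F)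
      ((volume.restrict (Set.Ioc 0 Z)).prod (volume.restrict (Set.Ioi 1))) := by
    rw [integrable_prod_iff' hmeasF]
    constructor
    · filter_upwards [ae_restrict_mem measurableSet_Ioi] with t ht
      have hc1 : Continuous fun s : ℝ => F s t := by
        apply Continuous.mul continuous_const
        apply Continuous.div_const
        continuity
      exact hc1.integrableOn_Ioc
    · have hnorm : ∀ t : ℝ, t ∈ Set.Ioi (1:ℝ) →
          (∫ s in Set.Ioc (0:ℝ) Z, ‖F s t‖) = g t := by
        intro t ht
        have ht0 : (0:ℝ) < t := lt_trans one_pos ht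
        rw [← hsec t ht]
        apply setIntegral_congr_fun measurableSet_Ioc
        intro s _
        exact Real.norm_of_nonneg (hFnn s t ht0)
      apply hgint.congr
      filter_upwards [ae_restrict_mem measurableSet_Ioi] with t ht
      exact (hnorm t ht).symm
  have hswap := MeasureTheory.integral_integral_swap (f := F) hprod
  calc (∫ s in (0:ℝ)..Z, κ * E1 (κ * |s - τ|))
      = ∫ s in Set.Ioc (0:ℝ) Z, ∫ t in Set.Ioi (1:ℝ), F s t := by
        rw [intervalIntegral.integral_of_le hZ.le]
        exact setIntegral_congr_fun measurableSet_Ioc (fun s _ => hpt s)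
    _ = ∫ t in Set.Ioi (1:ℝ), ∫ s in Set.Ioc (0:ℝ) Z, F s t := hswap
    _ = ∫ t in Set.Ioi (1:ℝ), g t := setIntegral_congr_fun measurableSet_Ioi hsec
    _ ≤ ∫ t in Set.Ioi (1:ℝ), (2 - 2 * Real.exp (-(κ * Z * t))) / t ^ 2 := by
        apply setIntegral_mono_on hgint _ measurableSet_Ioi
        · intro t ht
          have ht1 : (1:ℝ) < t := ht
          have ht0 : (0:ℝ) < t := lt_trans one_pos ht1
          rw [hg]
          have hm1 := mul_le_mul_of_nonneg_left hτZ (mul_pos hκ ht0).le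
          have hm2 := mul_le_mul_of_nonneg_left (by linarith : Z - τ ≤ Z) (mul_pos hκ ht0).le
          have e1 : Real.exp (-(κ * Z * t)) ≤ Real.exp (-(κ * t * τ)) := by
            apply Real.exp_le_exp.mpr; nlinarith
          have e2 : Real.exp (-(κ * Z * t)) ≤ Real.exp (-(κ * t * (Z - τ))) := by
            apply Real.exp_le_exp.mpr; nlinarith
          apply (div_le_div_iff_of_pos_right (by positivity : (0:ℝ) < t ^ 2)).mpr
          linarith
        · apply integrable_of_le_inv_sq (by fun_prop)
          intro t ht
          have ht0 : (0:ℝ) < t := lt_trans one_pos ht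
          have h1 : Real.exp (-(κ * Z * t)) ≤ 1 := Real.exp_le_one_iff.mpr (neg_nonpos.mpr (by positivity))
          have h4 : 0 < Real.exp (-(κ * Z * t)) := Real.exp_pos _
          rw [abs_div, abs_of_nonneg (by nlinarith : (0:ℝ) ≤ 2 - 2 * Real.exp (-(κ * Z * t))), abs_of_nonneg (by positivity : (0:ℝ) ≤ t ^ 2)]
          rw [div_le_iff₀ (by positivity), show 2 * (t^2)⁻¹ * t^2 = 2 * ((t^2)⁻¹ * t^2) by ring,
            inv_mul_cancel₀ (by positivity : (t:ℝ)^2 ≠ 0)]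
          nlinarith

theorem C1_lt_one (Z κ : ℝ) (hZ : 0 < Z) (hκ : 0 < κ) : C1 Z κ < 1 := by
  set d : ℝ → ℝ := fun t => Real.exp (-(κ * Z * t)) / t ^ 2 with hd
  have hδint : IntegrableOn d (Set.Ioi 1) volume := by
    apply integrable_of_le_inv_sq (by fun_prop)
    intro t ht
    have ht0 : (0:ℝ) < t := lt_trans one_pos ht
    have h1 : Real.exp (-(κ * Z * t)) ≤ 1 :=
      Real.exp_le_one_iff.mpr (neg_nonpos.mpr (by positivity))
    rw [hd, one_mul, abs_div, abs_of_nonneg (Real.exp_nonneg _),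
      abs_of_nonneg (by positivity : (0:ℝ) ≤ t ^ 2)]
    apply div_le_div_of_nonneg_right h1 (by positivity) |>.trans_eq
    exact one_div (t ^ 2)
  set δ : ℝ := ∫ t in Set.Ioi (1:ℝ), d t with hδ
  have hδpos : 0 < δ := by
    rw [hδ, setIntegral_pos_iff_support_of_nonneg_ae (ae_of_all _ fun t => by positivity) hδint]
    have hsub : Set.Ioi (1:ℝ) ⊆ Function.support d ∩ Set.Ioi 1 := by
      intro t ht
      have ht0 : (0:ℝ) < t := lt_trans one_pos ht
      refine ⟨?_, ht⟩
      have : 0 < d t := by rw [hd]; positivity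
      exact this.ne'
    calc (0:ENNReal) < volume (Set.Ioi (1:ℝ)) := by rw [Real.volume_Ioi]; exact ENNReal.zero_lt_top
      _ ≤ volume (Function.support d ∩ Set.Ioi 1) := measure_mono hsub
  have hinv : (∫ t in Set.Ioi (1:ℝ), (t ^ 2)⁻¹) = 1 := by
    rw [← setIntegral_congr_fun measurableSet_Ioi
      (fun t ht => rpow_neg_two_eq (lt_trans one_pos ht))]
    rw [integral_Ioi_rpow_of_lt (by norm_num) one_pos]
    norm_num
  have h2int : IntegrableOn (fun t : ℝ => 2 * (t ^ 2)⁻¹) (Set.Ioi 1) volume := by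
    apply integrable_of_le_inv_sq (by fun_prop)
    intro t ht
    have ht0 : (0:ℝ) < t := lt_trans one_pos ht
    rw [abs_of_nonneg (by positivity)]
  have hM : (∫ t in Set.Ioi (1:ℝ), (2 - 2 * Real.exp (-(κ * Z * t))) / t ^ 2)
      = 2 - 2 * δ := by
    have hcong : ∀ t ∈ Set.Ioi (1:ℝ),
        (2 - 2 * Real.exp (-(κ * Z * t))) / t ^ 2 = 2 * (t ^ 2)⁻¹ - 2 * d t := by
      intro t ht
      have ht0 : (0:ℝ) < t := lt_trans one_pos ht
      rw [hd]
      field_simp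
    rw [setIntegral_congr_fun measurableSet_Ioi hcong,
      integral_sub h2int (hδint.const_mul 2), MeasureTheory.integral_const_mul,
      MeasureTheory.integral_const_mul, hinv, ← hδ]
    ring
  have hub : ∀ x ∈ (fun τ => ∫ s in (0 : ℝ)..Z, κ * E1 (κ * |s - τ|)) '' Set.Icc 0 Z,
      x ≤ 2 - 2 * δ := by
    rintro x ⟨τ, hτ, rfl⟩
    rw [← hM]
    exact key_bound hZ hκ hτ.1 hτ.2
  have hne : ((fun τ => ∫ s in (0 : ℝ)..Z, κ * E1 (κ * |s - τ|)) '' Set.Icc 0 Z).Nonempty :=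
    ⟨_, Set.mem_image_of_mem _ (Set.mem_Icc.mpr ⟨le_refl (0:ℝ), hZ.le⟩)⟩
  have hsup := csSup_le hne hub
  rw [C1]
  nlinarith [hsup, hδpos]

end main
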